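/- Let E = u^e + p·F₀ be an Eisenstein polynomial of degree e over W, let j₁, j₂ be natural numbers, and let f ∈ W((u)). Set x₁ = p·u^{−j₁} and x₂ = u^{−j₂} + p·f in W((u)). Then: (i) E·φ(x₁) ≡ u^{e−(p−1)j₁}·x₁ (mod p²), and (ii) E·φ(x₂) ≡ u^{−(p−1)j₂}·E·x₂ + (u^{e+j₁}·φ(f) − u^{e+j₁−(p−1)j₂}·f)·x₁ (mod p²). -/

import Mathlib

open PowerSeries

/-- The Frobenius-semilinear map `φ` on the Laurent series ring `W(k)((u))`, sending
`Σ wᵢ uⁱ` to `Σ F(wᵢ) u^{p·i}`, where `F = WittVector.frobenius`. -/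
noncomputable def phiL (p : ℕ) [Fact p.Prime] {k : Type*} [CommRing k]
    (g : HahnSeries ℤ (WittVector p k)) : HahnSeries ℤ (WittVector p k) where
  coeff := fun j => if (p : ℤ) ∣ j then WittVector.frobenius (g.coeff (j / p)) else 0
  isPWO_support' := by
    have hsub : (Function.support fun j : ℤ =>
        if (p : ℤ) ∣ j then WittVector.frobenius (g.coeff (j / p)) else 0) ⊆
        (fun i : ℤ => (p : ℤ) * i) '' g.support := by
      intro j hj
      simp only [Function.mem_support] at hj
      by_cases hd : (p : ℤ) ∣ j
      · refine ⟨j / p, ?_, Int.mul_ediv_cancel' hd⟩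
        intro h0
        apply hj
        rw [if_pos hd, h0, map_zero]
      · exact absurd (if_neg hd) hj
    have hmono : Monotone (fun i : ℤ => (p : ℤ) * i) := fun a b hab =>
      mul_le_mul_of_nonneg_left hab (Int.natCast_nonneg p)
    exact (g.isPWO_support.image_of_monotone hmono).mono hsub

section aux

variable (p : ℕ) [Fact p.Prime] {k : Type*} [CommRing k]

lemma phiL_add (g h : HahnSeries ℤ (WittVector p k)) :
    phiL p (g + h) = phiL p g + phiL p h := by
  ext j
  simp only [phiL, HahnSeries.coeff_add]
  by_cases hd : (p : ℤ) ∣ j <;> simp [hd]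

lemma phiL_single (m : ℤ) (c : WittVector p k) :
    phiL p (HahnSeries.single m c) = HahnSeries.single ((p : ℤ) * m) (WittVector.frobenius c) := by
  have hp0 : (p : ℤ) ≠ 0 := by exact_mod_cast (Fact.out : p.Prime).ne_zero
  ext j
  simp only [phiL]
  by_cases hj : j = (p : ℤ) * m
  · subst hj
    rw [if_pos ⟨m, rfl⟩, Int.mul_ediv_cancel_left _ hp0, HahnSeries.coeff_single_same,
      HahnSeries.coeff_single_same]
  · rw [HahnSeries.coeff_single_of_ne hj]
    by_cases hd : (p : ℤ) ∣ j
    · rw [if_pos hd, HahnSeries.coeff_single_of_ne, map_zero]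
      intro h; apply hj; rw [← Int.ediv_mul_cancel hd, h, mul_comm]
    · rw [if_neg hd]

lemma phiL_p_mul (g : HahnSeries ℤ (WittVector p k)) :
    phiL p (HahnSeries.single (0 : ℤ) (p : WittVector p k) * g) =
      HahnSeries.single (0 : ℤ) (p : WittVector p k) * phiL p g := by
  ext j
  rw [HahnSeries.single_zero_mul_eq_smul, HahnSeries.single_zero_mul_eq_smul]
  simp only [phiL, HahnSeries.coeff_smul, smul_eq_mul]
  by_cases hd : (p : ℤ) ∣ j
  · simp [hd, map_natCast WittVector.frobenius]
  · simp [hd]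

end aux

/-- **The semilinear identities behind the rank-two Breuil–Kisin modules for `KC_{p²}`.**
Let `W = W(k)` for `k` a perfect field of characteristic `p`, let `E = u^e + p·F₀` be an
Eisenstein polynomial of degree `e ≥ 1` over `W`, let `j₁, j₂ ∈ ℕ` and `f ∈ W((u))`.
Set `x₁ = p·u^{−j₁}` and `x₂ = u^{−j₂} + p·f`.  Then, coefficientwise mod `p²`:
(i)  `E·φ(x₁) ≡ u^{e−(p−1)j₁}·x₁`, and
(ii) `E·φ(x₂) ≡ u^{−(p−1)j₂}·E·x₂ + (u^{e+j₁}·φ(f) − u^{e+j₁−(p−1)j₂}·f)·x₁`. -/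
theorem rank_two_BK_laurent_identities
    (p : ℕ) [Fact p.Prime]
    (k : Type*) [Field k] [CharP k p] [PerfectRing k p]
    (e : ℕ) (he : 1 ≤ e)
    (F0 : PowerSeries (WittVector p k))
    (hF0deg : ∀ i : ℕ, e ≤ i → coeff i F0 = 0)
    (hc0 : IsUnit (constantCoeff F0))
    (j₁ j₂ : ℕ) (f : HahnSeries ℤ (WittVector p k))
    (E x₁ x₂ : HahnSeries ℤ (WittVector p k))
    (hE : E = HahnSeries.ofPowerSeries ℤ (WittVector p k)
        (X ^ e + C (p : WittVector p k) * F0))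
    (hx₁ : x₁ = HahnSeries.single (0 : ℤ) (p : WittVector p k) *
        HahnSeries.single (-(j₁ : ℤ)) (1 : WittVector p k))
    (hx₂ : x₂ = HahnSeries.single (-(j₂ : ℤ)) (1 : WittVector p k) +
        HahnSeries.single (0 : ℤ) (p : WittVector p k) * f) :
    (∀ j : ℤ, (p : WittVector p k) ^ 2 ∣
        (E * phiL p x₁ -
          HahnSeries.single ((e : ℤ) - ((p : ℤ) - 1) * (j₁ : ℤ)) (1 : WittVector p k) * x₁).coeff j) ∧
    (∀ j : ℤ, (p : WittVector p k) ^ 2 ∣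
        (E * phiL p x₂ -
          (HahnSeries.single (-(((p : ℤ) - 1) * (j₂ : ℤ))) (1 : WittVector p k) * E * x₂ +
            (HahnSeries.single ((e : ℤ) + (j₁ : ℤ)) (1 : WittVector p k) * phiL p f -
              HahnSeries.single ((e : ℤ) + (j₁ : ℤ) - ((p : ℤ) - 1) * (j₂ : ℤ))
                (1 : WittVector p k) * f) * x₁)).coeff j) := by

  have hE' : E = HahnSeries.single (e : ℤ) (1 : WittVector p k) +
      HahnSeries.single (0 : ℤ) (p : WittVector p k) *
        HahnSeries.ofPowerSeries ℤ (WittVector p k) F0 := by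
    rw [hE, map_add, map_mul, HahnSeries.ofPowerSeries_X_pow, HahnSeries.ofPowerSeries_C,
      HahnSeries.C_apply]
  set G : HahnSeries ℤ (WittVector p k) := HahnSeries.ofPowerSeries ℤ (WittVector p k) F0
    with hG
  have hx₁' : x₁ = HahnSeries.single (-(j₁ : ℤ)) (p : WittVector p k) := by
    rw [hx₁, HahnSeries.single_mul_single, zero_add, mul_one]
  have hφx₁ : phiL p x₁ = HahnSeries.single ((p : ℤ) * (-(j₁ : ℤ))) (p : WittVector p k) := by
    rw [hx₁', phiL_single, map_natCast]
  have hφx₂ : phiL p x₂ = HahnSeries.single ((p : ℤ) * (-(j₂ : ℤ))) (1 : WittVector p k) +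
      HahnSeries.single (0 : ℤ) (p : WittVector p k) * phiL p f := by
    rw [hx₂, phiL_add, phiL_single, phiL_p_mul, map_one]
  have key : ∀ (R : HahnSeries ℤ (WittVector p k)) (j : ℤ),
      (HahnSeries.single (0 : ℤ) ((p : WittVector p k) ^ 2) * R).coeff j = (p : WittVector p k) ^ 2 * R.coeff j := by
    intro R j
    rw [HahnSeries.single_zero_mul_eq_smul, HahnSeries.coeff_smul, smul_eq_mul]
  constructor
  · intro j
    have main : E * phiL p x₁ -
        HahnSeries.single ((e : ℤ) - ((p : ℤ) - 1) * (j₁ : ℤ)) (1 : WittVector p k) * x₁ =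
        HahnSeries.single (0 : ℤ) ((p : WittVector p k) ^ 2) *
          (HahnSeries.single ((p : ℤ) * (-(j₁ : ℤ))) (1 : WittVector p k) * G) := by
      rw [hE', hφx₁, hx₁']
      have h1 : HahnSeries.single (e : ℤ) (1 : WittVector p k) *
          HahnSeries.single ((p : ℤ) * (-(j₁ : ℤ))) (p : WittVector p k) =
          HahnSeries.single ((e : ℤ) - ((p : ℤ) - 1) * (j₁ : ℤ)) (1 : WittVector p k) *
            HahnSeries.single (-(j₁ : ℤ)) (p : WittVector p k) := by
        rw [HahnSeries.single_mul_single, HahnSeries.single_mul_single,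
          show (e : ℤ) + (p : ℤ) * (-(j₁ : ℤ)) =
            ((e : ℤ) - ((p : ℤ) - 1) * (j₁ : ℤ)) + (-(j₁ : ℤ)) by ring]
      have h2 : HahnSeries.single (0 : ℤ) (p : WittVector p k) *
          HahnSeries.single ((p : ℤ) * (-(j₁ : ℤ))) (p : WittVector p k) =
          HahnSeries.single (0 : ℤ) ((p : WittVector p k) ^ 2) *
            HahnSeries.single ((p : ℤ) * (-(j₁ : ℤ))) (1 : WittVector p k) := by
        rw [HahnSeries.single_mul_single, HahnSeries.single_mul_single, mul_one, ← sq]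
      linear_combination h1 + G * h2
    rw [main, key]
    exact Dvd.intro _ rfl
  · intro j
    have main : E * phiL p x₂ -
        (HahnSeries.single (-(((p : ℤ) - 1) * (j₂ : ℤ))) (1 : WittVector p k) * E * x₂ +
          (HahnSeries.single ((e : ℤ) + (j₁ : ℤ)) (1 : WittVector p k) * phiL p f -
            HahnSeries.single ((e : ℤ) + (j₁ : ℤ) - ((p : ℤ) - 1) * (j₂ : ℤ)) (1 : WittVector p k) * f) * x₁) =
        HahnSeries.single (0 : ℤ) ((p : WittVector p k) ^ 2) *
          (G * phiL p f -
            HahnSeries.single (-(((p : ℤ) - 1) * (j₂ : ℤ))) (1 : WittVector p k) * G * f) := by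
      rw [hE', hφx₂, hx₁', hx₂]
      set A := HahnSeries.single (e : ℤ) (1 : WittVector p k)
      set P := HahnSeries.single (0 : ℤ) (p : WittVector p k)
      set S := HahnSeries.single (-(((p : ℤ) - 1) * (j₂ : ℤ))) (1 : WittVector p k)
      set B := HahnSeries.single (-(j₂ : ℤ)) (1 : WittVector p k)
      set B2 := HahnSeries.single ((p : ℤ) * (-(j₂ : ℤ))) (1 : WittVector p k)
      set C1 := HahnSeries.single ((e : ℤ) + (j₁ : ℤ)) (1 : WittVector p k)
      set C2 := HahnSeries.single ((e : ℤ) + (j₁ : ℤ) - ((p : ℤ) - 1) * (j₂ : ℤ)) (1 : WittVector p k)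
      set X1 := HahnSeries.single (-(j₁ : ℤ)) (p : WittVector p k)
      set Q := HahnSeries.single (0 : ℤ) ((p : WittVector p k) ^ 2)
      have h1 : A * B2 = S * (A * B) := by
        simp only [A, B2, S, B, HahnSeries.single_mul_single, mul_one, one_mul]
        rw [show (e : ℤ) + (p : ℤ) * (-(j₂ : ℤ)) =
          -(((p : ℤ) - 1) * (j₂ : ℤ)) + ((e : ℤ) + (-(j₂ : ℤ))) by ring]
      have h2 : P * B2 = S * (P * B) := by
        simp only [P, B2, S, B, HahnSeries.single_mul_single, mul_one, one_mul]
        rw [show (0 : ℤ) + (p : ℤ) * (-(j₂ : ℤ)) =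
          -(((p : ℤ) - 1) * (j₂ : ℤ)) + ((0 : ℤ) + (-(j₂ : ℤ))) by ring]
      have h3 : A * P = C1 * X1 := by
        simp only [A, P, C1, X1, HahnSeries.single_mul_single, mul_one, one_mul]
        rw [show (e : ℤ) + (0 : ℤ) = ((e : ℤ) + (j₁ : ℤ)) + (-(j₁ : ℤ)) by ring]
      have h4 : S * (A * P) = C2 * X1 := by
        simp only [S, A, P, C2, X1, HahnSeries.single_mul_single, mul_one, one_mul]
        rw [show -(((p : ℤ) - 1) * (j₂ : ℤ)) + ((e : ℤ) + (0 : ℤ)) =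
          ((e : ℤ) + (j₁ : ℤ) - ((p : ℤ) - 1) * (j₂ : ℤ)) + (-(j₁ : ℤ)) by ring]
      have h5 : P * P = Q := by
        simp only [P, Q]
        rw [HahnSeries.single_mul_single, add_zero, ← sq]
      linear_combination h1 + G * h2 + phiL p f * h3 - f * h4 + G * phiL p f * h5 -
        S * G * f * h5
    rw [main, key]
    exact Dvd.intro _ rfl
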